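/- arXiv:math/0106121 — 2 statements merged into one kernel-verified Lean document; each statement's English description precedes it below -/
import Mathlib

section
/- Let u be a fixed point of a primitive morphism σ on a finite alphabet A belonging to class P, i.e., there is a palindrome p and palindromes q_a with σ(a) = p q_a for all a ∈ A (or σ(a) = q_a p for all a). Then there exist a primitive morphism τ on A belonging to class P in which the palindrome p' occurring in the class-P decomposition has length 0 or 1, and an infinite sequence v with τ(v) = v, such that v has exactly the same set of factors as u; moreover τ can be chosen with either the form a → p' q'_a for all a, or the form a → q'_a p' for all a. -/
namespace PalPaper

variable {α : Type*}

/-- The finite word `u i, u (i+1), …, u (i+k-1)` read off the infinite sequence `u`. -/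
def factorAt (u : ℕ → α) (i k : ℕ) : List α :=
  (List.range k).map fun j => u (i + j)

/-- `w` occurs as a contiguous block (factor) in the infinite sequence `u`. -/
def IsFactor (u : ℕ → α) (w : List α) : Prop :=
  ∃ i, w = factorAt u i w.length

/-- A palindrome is a word equal to its reversal. -/
def IsPalindrome (w : List α) : Prop := w.reverse = w

/-- Number of distinct factors of length `k` of `u`. -/
noncomputable def facComplexity (u : ℕ → α) (k : ℕ) : ℕ :=
  Set.ncard {w : List α | w.length = k ∧ IsFactor u w}

/-- Number of distinct palindromic factors of length `k` of `u`. -/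
noncomputable def palComplexity (u : ℕ → α) (k : ℕ) : ℕ :=
  Set.ncard {w : List α | w.length = k ∧ IsFactor u w ∧ IsPalindrome w}

/-- `p ≥ 1` is a period of the finite word `w`. -/
def IsPeriodOf (p : ℕ) (w : List α) : Prop :=
  1 ≤ p ∧ ∀ i (h : i + p < w.length), w[i]'(by omega) = w[i + p]'h

/-- The minimal period of a finite word. -/
noncomputable def minPeriod (w : List α) : ℕ := sInf {p | IsPeriodOf p w}

/-- The prefix of length `m` of the infinite sequence `u`, as a finite word. -/
def seqPrefix (u : ℕ → α) (m : ℕ) : List α := (List.range m).map u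

/-- The word `σ(u 0) σ(u 1) ⋯ σ(u (n-1))`. -/
def substPrefix (σ : α → List α) (u : ℕ → α) (n : ℕ) : List α :=
  (List.range n).flatMap fun i => σ (u i)

/-- `v = σ(u)`: every word `σ(u 0) ⋯ σ(u (n-1))` is the corresponding prefix of `v`. -/
def IsMorphicImage (σ : α → List α) (u v : ℕ → α) : Prop :=
  ∀ n, substPrefix σ u n = seqPrefix v (substPrefix σ u n).length

/-- `u` is a fixed point of the morphism `σ`, i.e. `σ(u) = u`. -/
def IsFixedPointOf (σ : α → List α) (u : ℕ → α) : Prop := IsMorphicImage σ u u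

/-- The `k`-th iterate of a morphism, applied to a letter. -/
def morphIter (σ : α → List α) : ℕ → α → List α
  | 0, a => [a]
  | k + 1, a => (σ a).flatMap (morphIter σ k)

/-- A morphism is primitive if some iterate maps every letter to a word
containing every letter. -/
def IsPrimitive (σ : α → List α) : Prop :=
  ∃ k, 1 ≤ k ∧ ∀ a b : α, b ∈ morphIter σ k a

/-- A morphism belongs to class P: `σ a = p ++ q a` for all `a` (or
`σ a = q a ++ p` for all `a`) with `p` and all the `q a` palindromes. -/
def ClassP (σ : α → List α) : Prop :=
  ∃ p : List α, IsPalindrome p ∧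
    ((∀ a, ∃ qa, IsPalindrome qa ∧ σ a = p ++ qa) ∨
     (∀ a, ∃ qa, IsPalindrome qa ∧ σ a = qa ++ p))

section Aux

variable {σ f g : α → List α} {u v : ℕ → α}

lemma morphIter_zero (f : α → List α) (a : α) : morphIter f 0 a = [a] := rfl

lemma morphIter_succ (f : α → List α) (k : ℕ) (a : α) :
    morphIter f (k+1) a = (f a).flatMap (morphIter f k) := rfl

lemma morphIter_one (f : α → List α) (a : α) : morphIter f 1 a = f a := by
  rw [morphIter_succ, show morphIter f 0 = fun b : α => [b] from funext fun b => rfl,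
    List.flatMap_singleton']

lemma morphIter_add (f : α → List α) (m n : ℕ) (a : α) :
    morphIter f (m + n) a = (morphIter f m a).flatMap (morphIter f n) := by
  induction m generalizing a with
  | zero => simp [morphIter_zero]
  | succ m ih =>
      have h1 : m + 1 + n = (m + n) + 1 := by omega
      rw [h1, morphIter_succ, morphIter_succ, List.flatMap_assoc]
      congr 1; funext b; exact ih b

lemma flatMap_morphIter_succ_left (f : α → List α) (M : ℕ) (w : List α) :
    w.flatMap (morphIter f (M+1)) = (w.flatMap f).flatMap (morphIter f M) := by
  rw [List.flatMap_assoc]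
  congr 1

lemma flatMap_morphIter_succ_right (f : α → List α) (M : ℕ) (w : List α) :
    w.flatMap (morphIter f (M+1)) = (w.flatMap (morphIter f M)).flatMap f := by
  rw [List.flatMap_assoc]
  congr 1; funext a
  show morphIter f (M+1) a = _
  rw [morphIter_add]
  congr 1; funext b; rw [morphIter_one]

lemma morphIter_mul (f : α → List α) (j M : ℕ) (a : α) :
    morphIter (morphIter f j) M a = morphIter f (j * M) a := by
  induction M generalizing a with
  | zero => simp [morphIter_zero]
  | succ M ih =>
      rw [morphIter_succ]
      have : j * (M + 1) = j + j * M := by ring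
      rw [this, morphIter_add]
      congr 1; funext b; exact ih b

lemma morphIter_succ_right {f : α → List α} {N : ℕ} {a : α} :
    morphIter f (N+1) a = (morphIter f N a).flatMap f := by
  rw [morphIter_add f N 1]
  congr 1; funext b; rw [morphIter_one]

lemma morphIter_ne_nil (hf : ∀ a, f a ≠ []) (M : ℕ) (a : α) :
    morphIter f M a ≠ [] := by
  induction M generalizing a with
  | zero => simp [morphIter_zero]
  | succ M ih =>
      rw [morphIter_succ]
      intro h
      rcases List.exists_mem_of_ne_nil _ (hf a) with ⟨b, hb⟩
      rcases List.exists_mem_of_ne_nil _ (ih b) with ⟨c, hc⟩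
      have : c ∈ (f a).flatMap (morphIter f M) := List.mem_flatMap.2 ⟨b, hb, hc⟩
      rw [h] at this; exact absurd this (List.not_mem_nil (a := c))

lemma length_le_length_flatMap (hg : ∀ a, g a ≠ []) (w : List α) :
    w.length ≤ (w.flatMap g).length := by
  induction w with
  | nil => simp
  | cons a w ih =>
      rw [List.flatMap_cons, List.length_append, List.length_cons]
      have : 1 ≤ (g a).length := List.length_pos_iff.2 (hg a)
      omega

lemma flatMap_infix_of_mem {b : α} {w : List α} (hb : b ∈ w) (g : α → List α) :
    g b <:+: w.flatMap g := by
  rcases List.append_of_mem hb with ⟨s, t, rfl⟩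
  refine ⟨s.flatMap g, t.flatMap g, ?_⟩
  simp

lemma mem_morphIter_congr (hfg : ∀ a b, b ∈ f a ↔ b ∈ g a) (M : ℕ) (a b : α) :
    b ∈ morphIter f M a ↔ b ∈ morphIter g M a := by
  induction M generalizing a b with
  | zero => simp [morphIter_zero]
  | succ M ih =>
      rw [morphIter_succ, morphIter_succ, List.mem_flatMap, List.mem_flatMap]
      constructor
      · rintro ⟨d, hd, hbd⟩; exact ⟨d, (hfg a d).1 hd, (ih d b).1 hbd⟩
      · rintro ⟨d, hd, hbd⟩; exact ⟨d, (hfg a d).2 hd, (ih d b).2 hbd⟩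

lemma mem_morphIter_ge {k : ℕ} (hf : ∀ a, f a ≠ [])
    (hk : ∀ a b : α, b ∈ morphIter f k a) {M : ℕ} (hM : k ≤ M) (a b : α) :
    b ∈ morphIter f M a := by
  have h1 : M = (M - k) + k := by omega
  rw [h1, morphIter_add]
  rcases List.exists_mem_of_ne_nil _ (morphIter_ne_nil hf (M - k) a) with ⟨d, hd⟩
  exact List.mem_flatMap.2 ⟨d, hd, hk d b⟩

/-! ### seqPrefix and factorAt -/

@[simp] lemma length_seqPrefix (u : ℕ → α) (m : ℕ) : (seqPrefix u m).length = m := by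
  simp [seqPrefix]

@[simp] lemma getElem_seqPrefix (u : ℕ → α) (m i : ℕ) (h : i < (seqPrefix u m).length) :
    (seqPrefix u m)[i] = u i := by
  simp [seqPrefix]

@[simp] lemma length_factorAt (u : ℕ → α) (i k : ℕ) : (factorAt u i k).length = k := by
  simp [factorAt]

@[simp] lemma getElem_factorAt (u : ℕ → α) (i k j : ℕ) (h : j < (factorAt u i k).length) :
    (factorAt u i k)[j] = u (i + j) := by
  simp [factorAt]

lemma seqPrefix_take (u : ℕ → α) {m n : ℕ} (h : m ≤ n) :
    (seqPrefix u n).take m = seqPrefix u m := by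
  apply List.ext_getElem
  · simp [h]
  · intro i h1 h2
    rw [List.getElem_take, getElem_seqPrefix, getElem_seqPrefix]

lemma seqPrefix_prefix (u : ℕ → α) {m n : ℕ} (h : m ≤ n) :
    seqPrefix u m <+: seqPrefix u n := by
  rw [← seqPrefix_take u h]; exact List.take_prefix _ _

lemma seqPrefix_add_factorAt (u : ℕ → α) (i j : ℕ) :
    seqPrefix u (i + j) = seqPrefix u i ++ factorAt u i j := by
  apply List.ext_getElem
  · simp
  · intro n h1 h2
    simp only [length_seqPrefix] at h1
    rw [getElem_seqPrefix]
    by_cases hn : n < i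
    · rw [List.getElem_append_left (by simpa using hn), getElem_seqPrefix]
    · rw [List.getElem_append_right (by simp; omega), getElem_factorAt]
      simp only [length_seqPrefix]; congr 1; omega

lemma factorAt_add (u : ℕ → α) (i j1 j2 : ℕ) :
    factorAt u i (j1 + j2) = factorAt u i j1 ++ factorAt u (i + j1) j2 := by
  apply List.ext_getElem
  · simp
  · intro n h1 h2
    simp only [length_factorAt] at h1
    rw [getElem_factorAt]
    by_cases hn : n < j1
    · rw [List.getElem_append_left (by simpa using hn), getElem_factorAt]
    · rw [List.getElem_append_right (by simp; omega), getElem_factorAt]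
      simp only [length_factorAt]; congr 1; omega

lemma isFactor_iff_infix : IsFactor u t ↔ ∃ m, t <:+: seqPrefix u m := by
  constructor
  · rintro ⟨i, h⟩
    refine ⟨i + t.length, ?_⟩
    rw [seqPrefix_add_factorAt]
    exact ⟨seqPrefix u i, [], by rw [← h]; simp⟩
  · rintro ⟨m, s, r, hsr⟩
    refine ⟨s.length, ?_⟩
    apply List.ext_getElem
    · simp
    · intro n h1 h2
      simp only [length_factorAt] at h1 h2
      rw [getElem_factorAt]
      have hlen : s.length + (t.length + r.length) = m := by
        simpa using congrArg List.length hsr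
      have h3 : s.length + n < (s ++ t ++ r).length := by simp; omega
      have h5 : (s ++ t ++ r)[s.length + n]'h3 = u (s.length + n) := by
        rw [List.getElem_of_eq hsr, getElem_seqPrefix]
      rw [← h5, List.getElem_append_left (h := by simp; omega),
        List.getElem_append_right (h₁ := by simp)]
      simp only [Nat.add_sub_cancel_left]

lemma infix_prefix_isFactor {t : List α} {m : ℕ} (h : t <:+: seqPrefix u m) :
    IsFactor u t := isFactor_iff_infix.2 ⟨m, h⟩

lemma substPrefix_eq_flatMap (σ : α → List α) (u : ℕ → α) (n : ℕ) :
    substPrefix σ u n = (seqPrefix u n).flatMap σ := by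
  simp [substPrefix, seqPrefix, List.flatMap_map]

lemma fixpow (hfix : IsFixedPointOf σ u) (M n : ℕ) :
    (seqPrefix u n).flatMap (morphIter σ M)
      = seqPrefix u ((seqPrefix u n).flatMap (morphIter σ M)).length := by
  induction M generalizing n with
  | zero =>
      rw [show morphIter σ 0 = fun b : α => [b] from funext fun b => rfl,
        List.flatMap_singleton']
      simp
  | succ M ih =>
      rw [flatMap_morphIter_succ_left]
      have h0 : (seqPrefix u n).flatMap σ
          = seqPrefix u ((seqPrefix u n).flatMap σ).length := by
        rw [← substPrefix_eq_flatMap]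
        exact hfix n
      rw [h0]
      exact ih _

end Aux

section Growth

variable {σ f τ : α → List α} {u v : ℕ → α}

lemma two_le_length_of_two_mem {b1 b2 : α} (hne : b1 ≠ b2) {l : List α}
    (h1 : b1 ∈ l) (h2 : b2 ∈ l) : 2 ≤ l.length := by
  classical
  have hsub : ({b1, b2} : Finset α) ⊆ l.toFinset := by
    intro x hx
    simp only [Finset.mem_insert, Finset.mem_singleton] at hx
    rcases hx with rfl | rfl <;> simpa [List.mem_toFinset]
  have := Finset.card_le_card hsub
  rw [Finset.card_pair hne] at this
  exact this.trans (List.toFinset_card_le l)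

lemma two_pow_le_flatMap {m : ℕ} {g : α → List α} {w : List α}
    (hw : 2 ≤ w.length) (hg : ∀ b, 2 ^ m ≤ (g b).length) :
    2 ^ (m + 1) ≤ (w.flatMap g).length := by
  match w with
  | a :: b :: w =>
    rw [List.flatMap_cons, List.flatMap_cons, List.length_append, List.length_append]
    have := hg a
    have := hg b
    have : 0 ≤ (w.flatMap g).length := Nat.zero_le _
    rw [pow_succ]
    omega

/-- growth of iterates of a primitive morphism over an alphabet with ≥ 2 letters -/
lemma growth_of_primitive {k : ℕ} (hk1 : 1 ≤ k) (hk : ∀ a b : α, b ∈ morphIter σ k a)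
    (hcard : ∃ b1 b2 : α, b1 ≠ b2) (m : ℕ) (a : α) :
    2 ^ m ≤ (morphIter σ (m * k) a).length := by
  have hσne : ∀ a, σ a ≠ [] := by
    intro a h
    rcases hcard with ⟨b1, b2, hne⟩
    have h1 : morphIter σ k a = [] := by
      obtain ⟨k', rfl⟩ : ∃ k', k = k' + 1 := ⟨k - 1, by omega⟩
      rw [morphIter_succ, h]; rfl
    have := hk a a
    rw [h1] at this
    exact absurd this (List.not_mem_nil (a := a))
  have h2 : ∀ a : α, 2 ≤ (morphIter σ k a).length := by
    intro a
    rcases hcard with ⟨b1, b2, hne⟩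
    exact two_le_length_of_two_mem hne (hk a b1) (hk a b2)
  induction m generalizing a with
  | zero => simp [morphIter_zero]
  | succ m ih =>
      have heq : (m + 1) * k = k + m * k := by ring
      rw [heq, morphIter_add]
      exact two_pow_le_flatMap (h2 a) (fun b => ih b)

end Growth

section FixedPoint

variable {τ : α → List α} {c : α}

/-- iterates at a seed letter form a chain of prefixes -/
lemma morphIter_chain (w0 : List α) (hc : τ c = c :: w0) (N : ℕ) :
    morphIter τ N c <+: morphIter τ (N + 1) c := by
  have h1 : morphIter τ (N + 1) c = (morphIter τ 1 c).flatMap (morphIter τ N) := by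
    rw [← morphIter_add]; congr 1; omega
  rw [h1, morphIter_one, hc, List.flatMap_cons]
  exact List.prefix_append _ _

lemma morphIter_chain_le (w0 : List α) (hc : τ c = c :: w0) {N N' : ℕ} (h : N ≤ N') :
    morphIter τ N c <+: morphIter τ N' c := by
  induction N' with
  | zero => rw [Nat.le_zero.1 h]
  | succ N' ih =>
      rcases Nat.lt_or_ge N (N' + 1) with h' | h'
      · exact (ih (by omega)).trans (morphIter_chain w0 hc N')
      · have : N = N' + 1 := by omega
        rw [this]

/-- Construction of the fixed point of `τ` grown from seed `c`. -/
theorem exists_fixed_point (hne : ∀ a, τ a ≠ []) (w0 : List α) (hc : τ c = c :: w0)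
    (hgrow : ∀ L, ∃ N, L ≤ (morphIter τ N c).length) :
    ∃ v : ℕ → α, IsFixedPointOf τ v ∧ v 0 = c ∧
      (∀ N, morphIter τ N c = seqPrefix v (morphIter τ N c).length) := by
  classical
  have pick : ∀ n : ℕ, ∃ N, n < (morphIter τ N c).length := by
    intro n; rcases hgrow (n+1) with ⟨N, hN⟩; exact ⟨N, by omega⟩
  choose Nof hNof using pick
  set v : ℕ → α := fun n => (morphIter τ (Nof n) c)[n]'(hNof n) with hv
  have coh : ∀ (N n : ℕ) (h : n < (morphIter τ N c).length), (morphIter τ N c)[n] = v n := by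
    intro N n h
    rcases Nat.le_total N (Nof n) with h' | h'
    · exact (morphIter_chain_le w0 hc h').getElem h
    · exact ((morphIter_chain_le w0 hc h').getElem (hNof n)).symm
  have key : ∀ (N m : ℕ), m ≤ (morphIter τ N c).length →
      seqPrefix v m = (morphIter τ N c).take m := by
    intro N m hm
    apply List.ext_getElem
    · simp [hm]
    · intro i h1 h2
      rw [getElem_seqPrefix, List.getElem_take]
      exact (coh N i (by simp only [length_seqPrefix] at h1; omega)).symm
  have hvpref : ∀ N, morphIter τ N c = seqPrefix v (morphIter τ N c).length := by
    intro N
    rw [key N _ le_rfl, List.take_length]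
  refine ⟨v, ?_, ?_, hvpref⟩
  · intro n
    rcases hgrow n with ⟨N, hN⟩
    rw [substPrefix_eq_flatMap, key N n hN]
    have hpref : ((morphIter τ N c).take n).flatMap τ <+: morphIter τ (N+1) c := by
      rw [morphIter_succ_right]
      refine ⟨((morphIter τ N c).drop n).flatMap τ, ?_⟩
      rw [← List.flatMap_append, List.take_append_drop]
    have hlen : (((morphIter τ N c).take n).flatMap τ).length
        ≤ (morphIter τ (N+1) c).length := hpref.length_le
    rw [List.prefix_iff_eq_take.1 hpref]
    have hmin : (List.take (((morphIter τ N c).take n).flatMap τ).length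
        (morphIter τ (N+1) c)).length = (((morphIter τ N c).take n).flatMap τ).length := by
      rw [List.length_take]; omega
    rw [hmin, key (N+1) _ hlen]
  · have h1 : 0 < (morphIter τ 1 c).length := by
      rw [morphIter_one, hc]; simp
    have := coh 1 0 h1
    have h2 : (morphIter τ 1 c)[0]'h1 = (c :: w0)[0]'(by simp) :=
      List.getElem_of_eq (by rw [morphIter_one, hc]) _
    rw [List.getElem_cons_zero] at h2
    exact this.symm.trans h2

end FixedPoint

section Occ

variable {τ : α → List α} {v : ℕ → α}

lemma occ_large (hvfix : IsFixedPointOf τ v) (hne : ∀ a, τ a ≠ [])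
    {K : ℕ} (hK : ∀ a b : α, b ∈ morphIter τ K a)
    (hgrow : ∀ L, ∃ M, K ≤ M ∧ L ≤ (morphIter τ M (v 0)).length)
    (b : α) (N0 : ℕ) : ∃ i, N0 ≤ i ∧ v i = b := by
  rcases hgrow N0 with ⟨M, hKM, hM⟩
  have hb : b ∈ morphIter τ M (v 1) := mem_morphIter_ge hne hK hKM _ b
  rcases List.getElem_of_mem hb with ⟨j, hj, hjb⟩
  have h1 : seqPrefix v 2 = [v 0, v 1] := by
    simp [seqPrefix, List.range_succ]
  have h2 : (seqPrefix v 2).flatMap (morphIter τ M)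
      = morphIter τ M (v 0) ++ morphIter τ M (v 1) := by
    rw [h1]; simp
  have hfp := fixpow hvfix M 2
  have hlenX : (morphIter τ M (v 0)).length + j
      < ((seqPrefix v 2).flatMap (morphIter τ M)).length := by
    rw [h2]; simp; omega
  have hval : ((seqPrefix v 2).flatMap (morphIter τ M))[(morphIter τ M (v 0)).length + j]'hlenX
      = b := by
    rw [List.getElem_of_eq h2, List.getElem_append_right (by omega)]
    simpa using hjb
  refine ⟨(morphIter τ M (v 0)).length + j, by omega, ?_⟩
  have hval2 := (List.getElem_of_eq hfp hlenX).symm.trans hval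
  rw [getElem_seqPrefix] at hval2
  exact hval2

end Occ

/-! ### Conjugation pack -/

/-- The accumulated conjugating words. -/
def Zvec (A : α → List α) (z : List α) : ℕ → List α
  | 0 => []
  | M+1 => z.flatMap (morphIter A M) ++ Zvec A z M

section Pack

variable {A B : α → List α} {z : List α}

lemma Zvec_zero : Zvec A z 0 = [] := rfl

lemma Zvec_succ (M : ℕ) : Zvec A z (M+1) = z.flatMap (morphIter A M) ++ Zvec A z M := rfl

lemma flatMap_morphIter_zero (f : α → List α) (w : List α) :
    w.flatMap (morphIter f 0) = w := by
  rw [show morphIter f 0 = fun b : α => [b] from funext fun b => rfl,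
    List.flatMap_singleton']

lemma flatMap_singleton_letter (g : α → List α) (a : α) : [a].flatMap g = g a := by simp

lemma suffix_of_suffix_length_le {y x w : List α} (h : y <:+ x ++ w)
    (hl : y.length ≤ w.length) : y <:+ w := by
  have h1 : y.reverse <+: w.reverse ++ x.reverse := by
    have := h.reverse
    rwa [List.reverse_append] at this
  have h2 : y.reverse <+: w.reverse :=
    List.prefix_of_prefix_length_le h1 (List.prefix_append _ _) (by simpa)
  have := h2.reverse
  simpa using this

lemma prefix_of_prefix_length_le' {y x w : List α} (h : y <+: w ++ x)
    (hl : y.length ≤ w.length) : y <+: w :=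
  List.prefix_of_prefix_length_le h (List.prefix_append _ _) hl

variable (hrel : ∀ a, z ++ B a = A a ++ z)

include hrel

lemma pack_len (a : α) : (B a).length = (A a).length := by
  have := congrArg List.length (hrel a)
  simp only [List.length_append] at this
  omega

lemma pack_Bne (a : α) (ha : A a ≠ []) : B a ≠ [] := by
  intro h
  have := pack_len hrel a
  rw [h] at this
  simp only [List.length_nil] at this
  exact ha (List.length_eq_zero_iff.1 this.symm)

lemma pack_rel_word (w : List α) : z ++ w.flatMap B = w.flatMap A ++ z := by
  induction w with
  | nil => simp
  | cons a w ih =>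
      rw [List.flatMap_cons, List.flatMap_cons, ← List.append_assoc, hrel a,
        List.append_assoc, ih, ← List.append_assoc]

lemma pack_rel_iter (M : ℕ) (w : List α) :
    Zvec A z M ++ w.flatMap (morphIter B M) = w.flatMap (morphIter A M) ++ Zvec A z M := by
  induction M generalizing w with
  | zero => rw [flatMap_morphIter_zero, flatMap_morphIter_zero, Zvec_zero,
      List.nil_append, List.append_nil]
  | succ M ih =>
      rw [Zvec_succ, flatMap_morphIter_succ_left, flatMap_morphIter_succ_left]
      calc z.flatMap (morphIter A M) ++ Zvec A z M ++ (w.flatMap B).flatMap (morphIter B M)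
          = z.flatMap (morphIter A M)
            ++ (Zvec A z M ++ (w.flatMap B).flatMap (morphIter B M)) := by
            rw [List.append_assoc]
        _ = z.flatMap (morphIter A M)
            ++ ((w.flatMap B).flatMap (morphIter A M) ++ Zvec A z M) := by rw [ih]
        _ = (z ++ w.flatMap B).flatMap (morphIter A M) ++ Zvec A z M := by
            rw [List.flatMap_append, List.append_assoc]
        _ = (w.flatMap A ++ z).flatMap (morphIter A M) ++ Zvec A z M := by
            rw [pack_rel_word hrel]
        _ = (w.flatMap A).flatMap (morphIter A M)
            ++ (z.flatMap (morphIter A M) ++ Zvec A z M) := by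
            rw [List.flatMap_append, List.append_assoc]
        _ = (w.flatMap A).flatMap (morphIter A M) ++ Zvec A z (M+1) := by rw [Zvec_succ]

lemma pack_z_pref (w : List α) : z <+: w.flatMap A ++ z := by
  induction w with
  | nil => simp
  | cons a w ih =>
      obtain ⟨t, ht⟩ := ih
      rw [List.flatMap_cons, List.append_assoc, ← ht, ← List.append_assoc]
      have h1 : z <+: A a ++ z := ⟨B a, hrel a⟩
      exact h1.trans (List.prefix_append _ _)

lemma pack_Z_pref (M : ℕ) (w : List α) :
    Zvec A z M <+: w.flatMap (morphIter A M) ++ Zvec A z M := by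
  induction M generalizing w with
  | zero => exact List.nil_prefix
  | succ M ih =>
      obtain ⟨r, hr⟩ := pack_z_pref hrel w
      obtain ⟨t2, ht2⟩ := ih r
      refine ⟨t2, ?_⟩
      rw [Zvec_succ, flatMap_morphIter_succ_left]
      calc z.flatMap (morphIter A M) ++ Zvec A z M ++ t2
          = z.flatMap (morphIter A M) ++ (Zvec A z M ++ t2) := by rw [List.append_assoc]
        _ = z.flatMap (morphIter A M) ++ (r.flatMap (morphIter A M) ++ Zvec A z M) := by
            rw [ht2]
        _ = (z ++ r).flatMap (morphIter A M) ++ Zvec A z M := by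
            rw [List.flatMap_append, List.append_assoc]
        _ = (w.flatMap A ++ z).flatMap (morphIter A M) ++ Zvec A z M := by rw [hr]
        _ = (w.flatMap A).flatMap (morphIter A M)
            ++ (z.flatMap (morphIter A M) ++ Zvec A z M) := by
            rw [List.flatMap_append, List.append_assoc]

lemma pack_Z_suff (hA : ∀ a, A a ≠ []) (M : ℕ) (w : List α)
    (hw : M * z.length ≤ w.length) :
    Zvec A z M <:+ w.flatMap (morphIter B M) := by
  induction M generalizing w with
  | zero => exact List.nil_suffix
  | succ M ih =>
      have hBne : ∀ a, B a ≠ [] := fun a => pack_Bne hrel a (hA a)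
      have hlen1 : w.length ≤ (w.flatMap B).length := length_le_length_flatMap hBne w
      have hz : z <:+ w.flatMap B := by
        apply suffix_of_suffix_length_le (x := z)
        · rw [pack_rel_word hrel]
          exact List.suffix_append _ _
        · have h2 : (M+1) * z.length = M * z.length + z.length := by ring
          omega
      obtain ⟨r, hr⟩ := hz
      have hrlen : M * z.length ≤ r.length := by
        have := congrArg List.length hr
        simp only [List.length_append] at this
        have h2 : (M+1) * z.length = M * z.length + z.length := by ring
        omega
      obtain ⟨s, hs⟩ := ih r hrlen
      refine ⟨s, ?_⟩
      rw [flatMap_morphIter_succ_left, ← hr, List.flatMap_append]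
      have hswap : Zvec A z (M+1) = Zvec A z M ++ z.flatMap (morphIter B M) := by
        rw [Zvec_succ, ← pack_rel_iter hrel M z]
      rw [hswap, ← List.append_assoc, hs]

lemma pack_len_iter (M : ℕ) (a : α) :
    (morphIter B M a).length = (morphIter A M a).length := by
  have := congrArg List.length (pack_rel_iter hrel M [a])
  rw [flatMap_singleton_letter, flatMap_singleton_letter] at this
  simp only [List.length_append] at this
  omega

lemma pack_mem (a b : α) : b ∈ B a ↔ b ∈ A a := by
  have hp : (z ++ B a).Perm (z ++ A a) := by
    rw [hrel a]; exact List.perm_append_comm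
  exact ((List.perm_append_left_iff z).1 hp).mem_iff

lemma pack_mem_iter (M : ℕ) (a b : α) :
    b ∈ morphIter B M a ↔ b ∈ morphIter A M a :=
  mem_morphIter_congr (fun a b => pack_mem hrel a b) M a b

end Pack

/-! ### Assembly -/

section Assembly

variable {σ τ g : α → List α} {u v : ℕ → α} {z : List α} {c : α} {k : ℕ}

lemma primitive_ne_nil (hk1 : 1 ≤ k) (hk : ∀ a b : α, b ∈ morphIter σ k a) :
    ∀ a, σ a ≠ [] := by
  intro a h
  obtain ⟨k', rfl⟩ : ∃ k', k = k' + 1 := ⟨k - 1, by omega⟩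
  have h1 : morphIter σ (k'+1) a = [] := by rw [morphIter_succ, h]; rfl
  have := hk a a
  rw [h1] at this
  exact absurd this (List.not_mem_nil (a := a))

lemma isFixedPointOf_morphIter (hfix : IsFixedPointOf σ u) (j : ℕ) :
    IsFixedPointOf (morphIter σ j) u := by
  intro n
  rw [substPrefix_eq_flatMap]
  exact fixpow hfix j n

lemma prefix_append_left (x : List α) {y w : List α} (h : y <+: w) :
    x ++ y <+: x ++ w := by
  obtain ⟨t, ht⟩ := h
  exact ⟨t, by rw [List.append_assoc, ht]⟩

lemma suffix_append_right (y : List α) {s w : List α} (h : s <:+ w) :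
    s ++ y <:+ w ++ y := by
  obtain ⟨t, ht⟩ := h
  exact ⟨t, by rw [← List.append_assoc, ht]⟩

lemma factorAt_one (u : ℕ → α) (i : ℕ) : factorAt u i 1 = [u i] := by
  simp [factorAt, List.range_succ]

lemma seqPrefix_one (u : ℕ → α) : seqPrefix u 1 = [u 0] := by
  simp [seqPrefix, List.range_succ]

lemma factor_of_infix_block (hfix : IsFixedPointOf g u) {t : List α} (i j M : ℕ)
    (ht : t <:+: (factorAt u i j).flatMap (morphIter g M)) : IsFactor u t := by
  have h1 := fixpow hfix M (i + j)
  rw [seqPrefix_add_factorAt, List.flatMap_append] at h1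
  apply infix_prefix_isFactor (m := ((seqPrefix u i).flatMap (morphIter g M)
    ++ (factorAt u i j).flatMap (morphIter g M)).length)
  rw [← h1]
  exact ht.trans (List.suffix_append _ _).isInfix

lemma mem_sigma_pow_letter (hk1 : 1 ≤ k) (hk : ∀ a b : α, b ∈ morphIter σ k a)
    {M : ℕ} (hM : k ≤ M) (a b : α) : b ∈ morphIter σ M a :=
  mem_morphIter_ge (primitive_ne_nil hk1 hk) hk hM a b

/-- Growth of `σ`-iterates, packaged. -/
lemma sigma_grow (hk1 : 1 ≤ k) (hk : ∀ a b : α, b ∈ morphIter σ k a)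
    (hcard : ∃ b1 b2 : α, b1 ≠ b2) (L : ℕ) (a : α) :
    ∃ M, k ≤ M ∧ L ≤ (morphIter σ M a).length ∧ ∃ m, M = m * k := by
  refine ⟨(L + 1) * k, ?_, ?_, L + 1, rfl⟩
  · calc k = 1 * k := (one_mul k).symm
      _ ≤ (L + 1) * k := Nat.mul_le_mul_right k (by omega)
  · have h1 := growth_of_primitive hk1 hk hcard (L + 1) a
    have h2 : L < 2 ^ L := Nat.lt_two_pow_self
    have h3 : (2:ℕ) ^ L ≤ 2 ^ (L + 1) := Nat.pow_le_pow_right (by norm_num) (by omega)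
    omega

end Assembly

section AssembleMain

variable {σ τ : α → List α} {u : ℕ → α} {z : List α} {c : α} {k : ℕ}

/-- Common preparatory facts. -/
lemma prep_pi_prim (hk1 : 1 ≤ k) (hk : ∀ a b : α, b ∈ morphIter σ k a) (a b : α) :
    b ∈ morphIter (morphIter σ 2) k a := by
  rw [morphIter_mul]
  exact mem_sigma_pow_letter hk1 hk (by omega) a b

lemma prep_pi_ne (hk1 : 1 ≤ k) (hk : ∀ a b : α, b ∈ morphIter σ k a) (a : α) :
    morphIter σ 2 a ≠ [] :=
  morphIter_ne_nil (primitive_ne_nil hk1 hk) 2 a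

theorem assembly_left (hk1 : 1 ≤ k) (hk : ∀ a b : α, b ∈ morphIter σ k a)
    (hfix : IsFixedPointOf σ u) (hcard : ∃ b1 b2 : α, b1 ≠ b2)
    (hrel : ∀ a, z ++ τ a = morphIter σ 2 a ++ z)
    (hc : ∀ a, ∃ w, τ a = c :: w) :
    IsPrimitive τ ∧ ∃ v : ℕ → α, IsFixedPointOf τ v ∧
      ∀ t : List α, IsFactor v t ↔ IsFactor u t := by
  have hσne : ∀ a, σ a ≠ [] := primitive_ne_nil hk1 hk
  have hπne : ∀ a, morphIter σ 2 a ≠ [] := prep_pi_ne hk1 hk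
  have hπk : ∀ a b : α, b ∈ morphIter (morphIter σ 2) k a := prep_pi_prim hk1 hk
  have hπfix : IsFixedPointOf (morphIter σ 2) u := isFixedPointOf_morphIter hfix 2
  have hπgrow := sigma_grow (σ := morphIter σ 2) hk1 hπk hcard
  have hτne : ∀ a, τ a ≠ [] := fun a => pack_Bne hrel a (hπne a)
  have hτk : ∀ a b : α, b ∈ morphIter τ k a :=
    fun a b => (pack_mem_iter hrel k a b).2 (hπk a b)
  have hτlen : ∀ M a, (morphIter τ M a).length = (morphIter (morphIter σ 2) M a).length :=
    fun M a => pack_len_iter hrel M a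
  obtain ⟨w0, hw0⟩ := hc c
  obtain ⟨v, hvfix, hv0, hvpref⟩ := exists_fixed_point hτne w0 hw0 (by
    intro L
    obtain ⟨N, _, hN, _⟩ := hπgrow L c
    exact ⟨N, by rw [hτlen]; exact hN⟩)
  have occu : ∀ (b : α) N0, ∃ i, N0 ≤ i ∧ u i = b := by
    intro b N0
    refine occ_large hπfix hπne hπk ?_ b N0
    intro L
    obtain ⟨N, hkN, hN, _⟩ := hπgrow L (u 0)
    exact ⟨N, hkN, hN⟩
  have occv : ∀ (b : α) N0, ∃ i, N0 ≤ i ∧ v i = b := by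
    intro b N0
    refine occ_large hvfix hτne hτk ?_ b N0
    intro L
    obtain ⟨N, hkN, hN, _⟩ := hπgrow L (v 0)
    exact ⟨N, hkN, by rw [hτlen]; exact hN⟩
  have hZrel : ∀ N, Zvec (morphIter σ 2) z N ++ morphIter τ N c
      = morphIter (morphIter σ 2) N c ++ Zvec (morphIter σ 2) z N := by
    intro N
    have := pack_rel_iter hrel N [c]
    rwa [flatMap_singleton_letter, flatMap_singleton_letter] at this
  refine ⟨⟨k, hk1, hτk⟩, v, hvfix, ?_⟩
  intro t
  constructor
  · -- factors of v are factors of u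
    intro hf
    rw [isFactor_iff_infix] at hf
    obtain ⟨m, hm⟩ := hf
    obtain ⟨N, _, hN, _⟩ := hπgrow m c
    have hmN : m ≤ (morphIter τ N c).length := by rw [hτlen]; exact hN
    have ht1 : t <:+: morphIter τ N c := by
      have h2 : seqPrefix v m <+: morphIter τ N c := by
        rw [hvpref N]
        exact seqPrefix_prefix v hmN
      exact hm.trans h2.isInfix
    have ht2 : t <:+: morphIter (morphIter σ 2) N c ++ Zvec (morphIter σ 2) z N := by
      refine ht1.trans (List.IsSuffix.isInfix ⟨Zvec (morphIter σ 2) z N, hZrel N⟩)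
    obtain ⟨i, _, hic⟩ := occu c 0
    set ZN := Zvec (morphIter σ 2) z N with hZN
    set W := factorAt u (i+1) ZN.length with hW
    have hZpref : ZN <+: W.flatMap (morphIter (morphIter σ 2) N) := by
      apply prefix_of_prefix_length_le' (x := ZN)
      · exact pack_Z_pref hrel N W
      · have := length_le_length_flatMap (morphIter_ne_nil hπne N) W
        simp only [hW, length_factorAt] at this ⊢
        omega
    have hblock : morphIter (morphIter σ 2) N c ++ ZN
        <+: (factorAt u i (1 + ZN.length)).flatMap (morphIter (morphIter σ 2) N) := by
      rw [factorAt_add, List.flatMap_append, factorAt_one, hic, flatMap_singleton_letter]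
      exact prefix_append_left _ hZpref
    exact factor_of_infix_block hπfix i (1 + ZN.length) N (ht2.trans hblock.isInfix)
  · -- factors of u are factors of v
    intro hf
    rw [isFactor_iff_infix] at hf
    obtain ⟨m, hm⟩ := hf
    obtain ⟨M0, hkM0, hM0, _⟩ := sigma_grow hk1 hk hcard m (u 0)
    -- choose K' ≥ k with M0 + K' even
    obtain ⟨K', hkK', N, h2N⟩ : ∃ K', k ≤ K' ∧ ∃ N, K' + M0 = 2 * N := by
      rcases Nat.even_or_odd (M0 + k) with he | ho
      · obtain ⟨r, hr⟩ := he
        exact ⟨k, le_rfl, r, by omega⟩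
      · obtain ⟨r, hr⟩ := ho
        exact ⟨k + 1, by omega, r + 1, by omega⟩
    have hu0c : u 0 ∈ morphIter σ K' c := mem_sigma_pow_letter hk1 hk hkK' c (u 0)
    have ht1 : t <:+: morphIter σ M0 (u 0) := by
      have h3 := fixpow hfix M0 1
      rw [seqPrefix_one, flatMap_singleton_letter] at h3
      have h4 : seqPrefix u m <+: morphIter σ M0 (u 0) := by
        rw [h3]
        exact seqPrefix_prefix u (by rw [h3] at hM0; simpa using hM0)
      exact hm.trans h4.isInfix
    have ht2 : t <:+: morphIter (morphIter σ 2) N c := by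
      rw [morphIter_mul, ← h2N, morphIter_add]
      exact ht1.trans (flatMap_infix_of_mem hu0c (morphIter σ M0))
    set ZN := Zvec (morphIter σ 2) z N with hZN
    have ht3 : t <:+: ZN ++ morphIter τ N c := by
      refine ht2.trans (List.IsPrefix.isInfix ⟨ZN, (hZrel N).symm⟩)
    obtain ⟨i, hiN, hic⟩ := occv c (N * z.length)
    set W := factorAt v (i - N * z.length) (N * z.length) with hW
    have hZsuff : ZN <:+ W.flatMap (morphIter τ N) := by
      apply pack_Z_suff hrel hπne N W
      simp [hW]
    have hblock : ZN ++ morphIter τ N c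
        <:+ (factorAt v (i - N * z.length) (N * z.length + 1)).flatMap (morphIter τ N) := by
      rw [factorAt_add, List.flatMap_append, factorAt_one]
      have hveq : v (i - N * z.length + N * z.length) = c := by
        rw [Nat.sub_add_cancel hiN]; exact hic
      rw [hveq, flatMap_singleton_letter]
      exact suffix_append_right _ hZsuff
    exact factor_of_infix_block hvfix (i - N * z.length) (N * z.length + 1) N
      (ht3.trans hblock.isInfix)

end AssembleMain


section AssembleRight

variable {σ τ : α → List α} {u : ℕ → α} {z : List α} {c : α} {k : ℕ}

theorem assembly_right (hk1 : 1 ≤ k) (hk : ∀ a b : α, b ∈ morphIter σ k a)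
    (hfix : IsFixedPointOf σ u) (hcard : ∃ b1 b2 : α, b1 ≠ b2)
    (hrel : ∀ a, z ++ morphIter σ 2 a = τ a ++ z)
    (hc : ∀ a, ∃ w, τ a = c :: w) :
    IsPrimitive τ ∧ ∃ v : ℕ → α, IsFixedPointOf τ v ∧
      ∀ t : List α, IsFactor v t ↔ IsFactor u t := by
  have hσne : ∀ a, σ a ≠ [] := primitive_ne_nil hk1 hk
  have hπne : ∀ a, morphIter σ 2 a ≠ [] := prep_pi_ne hk1 hk
  have hπk : ∀ a b : α, b ∈ morphIter (morphIter σ 2) k a := prep_pi_prim hk1 hk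
  have hπfix : IsFixedPointOf (morphIter σ 2) u := isFixedPointOf_morphIter hfix 2
  have hπgrow := sigma_grow (σ := morphIter σ 2) hk1 hπk hcard
  have hτne : ∀ a, τ a ≠ [] := by
    intro a h
    have := pack_len hrel a
    rw [h] at this
    simp only [List.length_nil] at this
    exact hπne a (List.length_eq_zero_iff.1 this)
  have hτk : ∀ a b : α, b ∈ morphIter τ k a :=
    fun a b => (pack_mem_iter hrel k a b).1 (hπk a b)
  have hτlen : ∀ M a, (morphIter τ M a).length = (morphIter (morphIter σ 2) M a).length :=
    fun M a => (pack_len_iter hrel M a).symm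
  obtain ⟨w0, hw0⟩ := hc c
  obtain ⟨v, hvfix, hv0, hvpref⟩ := exists_fixed_point hτne w0 hw0 (by
    intro L
    obtain ⟨N, _, hN, _⟩ := hπgrow L c
    exact ⟨N, by rw [hτlen]; exact hN⟩)
  have occu : ∀ (b : α) N0, ∃ i, N0 ≤ i ∧ u i = b := by
    intro b N0
    refine occ_large hπfix hπne hπk ?_ b N0
    intro L
    obtain ⟨N, hkN, hN, _⟩ := hπgrow L (u 0)
    exact ⟨N, hkN, hN⟩
  have hZrel : ∀ N, Zvec τ z N ++ morphIter (morphIter σ 2) N c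
      = morphIter τ N c ++ Zvec τ z N := by
    intro N
    have := pack_rel_iter hrel N [c]
    rwa [flatMap_singleton_letter, flatMap_singleton_letter] at this
  refine ⟨⟨k, hk1, hτk⟩, v, hvfix, ?_⟩
  intro t
  constructor
  · -- factors of v are factors of u
    intro hf
    rw [isFactor_iff_infix] at hf
    obtain ⟨m, hm⟩ := hf
    obtain ⟨N, _, hN, _⟩ := hπgrow m c
    have hmN : m ≤ (morphIter τ N c).length := by rw [hτlen]; exact hN
    have ht1 : t <:+: morphIter τ N c := by
      have h2 : seqPrefix v m <+: morphIter τ N c := by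
        rw [hvpref N]
        exact seqPrefix_prefix v hmN
      exact hm.trans h2.isInfix
    set ZN := Zvec τ z N with hZN
    have ht2 : t <:+: ZN ++ morphIter (morphIter σ 2) N c := by
      refine ht1.trans (List.IsPrefix.isInfix ⟨ZN, (hZrel N).symm⟩)
    obtain ⟨i, hiN, hic⟩ := occu c (N * z.length)
    set W := factorAt u (i - N * z.length) (N * z.length) with hW
    have hZsuff : ZN <:+ W.flatMap (morphIter (morphIter σ 2) N) := by
      apply pack_Z_suff hrel hτne N W
      simp [hW]
    have hblock : ZN ++ morphIter (morphIter σ 2) N c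
        <:+ (factorAt u (i - N * z.length) (N * z.length + 1)).flatMap
          (morphIter (morphIter σ 2) N) := by
      rw [factorAt_add, List.flatMap_append, factorAt_one]
      have hueq : u (i - N * z.length + N * z.length) = c := by
        rw [Nat.sub_add_cancel hiN]; exact hic
      rw [hueq, flatMap_singleton_letter]
      exact suffix_append_right _ hZsuff
    exact factor_of_infix_block hπfix (i - N * z.length) (N * z.length + 1) N
      (ht2.trans hblock.isInfix)
  · -- factors of u are factors of v
    intro hf
    rw [isFactor_iff_infix] at hf
    obtain ⟨m, hm⟩ := hf
    obtain ⟨M0, hkM0, hM0, _⟩ := sigma_grow hk1 hk hcard m (u 0)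
    obtain ⟨K', hkK', N, h2N⟩ : ∃ K', k ≤ K' ∧ ∃ N, K' + M0 = 2 * N := by
      rcases Nat.even_or_odd (M0 + k) with he | ho
      · obtain ⟨r, hr⟩ := he
        exact ⟨k, le_rfl, r, by omega⟩
      · obtain ⟨r, hr⟩ := ho
        exact ⟨k + 1, by omega, r + 1, by omega⟩
    have hu0c : u 0 ∈ morphIter σ K' c := mem_sigma_pow_letter hk1 hk hkK' c (u 0)
    have ht1 : t <:+: morphIter σ M0 (u 0) := by
      have h3 := fixpow hfix M0 1
      rw [seqPrefix_one, flatMap_singleton_letter] at h3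
      have h4 : seqPrefix u m <+: morphIter σ M0 (u 0) := by
        rw [h3]
        exact seqPrefix_prefix u (by rw [h3] at hM0; simpa using hM0)
      exact hm.trans h4.isInfix
    have ht2 : t <:+: morphIter (morphIter σ 2) N c := by
      rw [morphIter_mul, ← h2N, morphIter_add]
      exact ht1.trans (flatMap_infix_of_mem hu0c (morphIter σ M0))
    set ZN := Zvec τ z N with hZN
    have ht3 : t <:+: morphIter τ N c ++ ZN := by
      refine ht2.trans (List.IsSuffix.isInfix ⟨ZN, hZrel N⟩)
    set W := factorAt v 1 ZN.length with hW
    have hZpref : ZN <+: W.flatMap (morphIter τ N) := by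
      apply prefix_of_prefix_length_le' (x := ZN)
      · exact pack_Z_pref hrel N W
      · have := length_le_length_flatMap (morphIter_ne_nil hτne N) W
        simp only [hW, length_factorAt] at this ⊢
        omega
    have hblock : morphIter τ N c ++ ZN
        <+: (factorAt v 0 (1 + ZN.length)).flatMap (morphIter τ N) := by
      rw [factorAt_add, List.flatMap_append, factorAt_one]
      have h0 : v (0 + 0) = c := by simpa using hv0
      have h1 : (0:ℕ) + 1 = 1 := rfl
      rw [show v 0 = c from hv0, flatMap_singleton_letter]
      have hW' : factorAt v (0 + 1) ZN.length = W := by rw [hW]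
      rw [hW']
      exact prefix_append_left _ hZpref
    exact factor_of_infix_block hvfix 0 (1 + ZN.length) N (ht3.trans hblock.isInfix)

end AssembleRight

/-! ### Palindromic slices -/

section PalSlice

variable {W Z : List α}

lemma pal_getElem (hW : W.reverse = W) {i : ℕ} (h : i < W.length) :
    W[i] = W[W.length - 1 - i]'(by omega) := by
  have h1 : W.reverse[i]'(by simpa) = W[W.length - 1 - i]'(by omega) :=
    List.getElem_reverse _
  have h2 : W.reverse[i]'(by simpa) = W[i] := List.getElem_of_eq hW _
  rw [← h1, h2]

lemma pal_pref_of_suff (hW : W.reverse = W) (hZ : Z.reverse = Z) (h : Z <:+ W) :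
    Z <+: W := by
  have := h.reverse
  rwa [hW, hZ] at this

lemma pal_suff_of_pref (hW : W.reverse = W) (hZ : Z.reverse = Z) (h : Z <+: W) :
    Z <:+ W := by
  have := h.reverse
  rwa [hW, hZ] at this

lemma palSlice (hW : W.reverse = W) {i j : ℕ} (hij : i ≤ j) (hjW : j ≤ W.length)
    (hsum : i + j = W.length) : ((W.take j).drop i).reverse = (W.take j).drop i := by
  apply List.ext_getElem
  · simp
  · intro n h1 h2
    simp only [List.length_reverse, List.length_drop, List.length_take] at h1 h2
    have hn : n < j - i := by omega
    have hgen : ∀ (m : ℕ) (hm : m < ((W.take j).drop i).length),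
        ((W.take j).drop i)[m] = W[i + m]'(by simp at hm; omega) := by
      intro m hm
      rw [List.getElem_drop, List.getElem_take]
    rw [List.getElem_reverse, hgen, hgen]
    rw [pal_getElem hW (show i + n < W.length by omega)]
    congr 1
    simp only [List.length_drop, List.length_take]
    omega

lemma getElem_index_congr (l : List α) {i j : ℕ} (h : i = j) (hi : i < l.length) :
    l[i]'hi = l[j]'(h ▸ hi) := by subst h; rfl

lemma eq_cons_head_drop {l : List α} (h : l ≠ []) :
    l = l[0]'(List.length_pos_iff.2 h) :: l.drop 1 := by
  cases l with
  | nil => exact absurd rfl h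
  | cons a l => rfl

end PalSlice

/-! ### Case 1: σ a = p ++ q a -/

section Case1

variable {σ : α → List α} {u : ℕ → α} {p : List α} {q : α → List α} {k : ℕ}

lemma morphIter_two (σ : α → List α) (a : α) : morphIter σ 2 a = (σ a).flatMap σ := by
  rw [show (2:ℕ) = 1 + 1 from rfl, morphIter_add, morphIter_one]
  congr 1; funext b; rw [morphIter_one]

lemma c1_shift (hσ : ∀ a, σ a = p ++ q a) (w : List α) :
    p ++ w.flatMap (fun b => q b ++ p) = w.flatMap σ ++ p := by
  induction w with
  | nil => simp
  | cons a w ih =>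
      simp only [List.flatMap_cons, hσ a, List.append_assoc]
      rw [ih]

lemma c1_revflat (hp : IsPalindrome p) (hq : ∀ a, IsPalindrome (q a))
    (hσ : ∀ a, σ a = p ++ q a) {w : List α} (hw : w.reverse = w) :
    (w.flatMap σ).reverse = w.flatMap (fun b => q b ++ p) := by
  rw [List.reverse_flatMap, hw]
  congr 1
  funext b
  show (σ b).reverse = _
  rw [hσ b, List.reverse_append, hp, hq b]

lemma c1_pal_flat (hp : IsPalindrome p) (hq : ∀ a, IsPalindrome (q a))
    (hσ : ∀ a, σ a = p ++ q a) {w : List α} (hw : w.reverse = w) :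
    (w.flatMap σ ++ p).reverse = w.flatMap σ ++ p := by
  rw [List.reverse_append, hp, c1_revflat hp hq hσ hw, c1_shift hσ]

lemma c1_palword (hp : IsPalindrome p) (hq : ∀ a, IsPalindrome (q a)) (a : α) :
    ((p ++ q a) ++ p).reverse = (p ++ q a) ++ p := by
  rw [List.reverse_append, List.reverse_append, hp, hq a]
  simp [List.append_assoc]

theorem case1_core (hk1 : 1 ≤ k) (hk : ∀ a b : α, b ∈ morphIter σ k a)
    (hfix : IsFixedPointOf σ u) (hcard : ∃ b1 b2 : α, b1 ≠ b2)
    (hp : IsPalindrome p) (hq : ∀ a, IsPalindrome (q a)) (hσ : ∀ a, σ a = p ++ q a)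
    (hpne : p ≠ []) {Z : List α} (hZdef : Z = p.flatMap σ ++ p)
    {i : ℕ} (hi1 : 1 ≤ i) (hile : i + 1 ≤ Z.length)
    {τ : α → List α} (hτdef : ∀ a, τ a = (morphIter σ 2 a ++ Z.take i).drop i) :
    (IsPrimitive τ ∧ ∃ v : ℕ → α, IsFixedPointOf τ v ∧
        ∀ t : List α, IsFactor v t ↔ IsFactor u t)
    ∧ (∀ a, τ a = ((morphIter σ 2 a ++ Z).take ((morphIter σ 2 a).length + i)).drop i)
    ∧ (∀ a, (τ a).length = (morphIter σ 2 a).length)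
    ∧ (∀ a, 1 ≤ (morphIter σ 2 a).length)
    ∧ (∀ a, (morphIter σ 2 a ++ Z).reverse = morphIter σ 2 a ++ Z)
    ∧ (∀ a, ∃ (h : Z.length - 1 - i < Z.length) (w : List α),
        τ a = Z[Z.length - 1 - i] :: w) := by
  have hσne : ∀ a, σ a ≠ [] := primitive_ne_nil hk1 hk
  have hπne : ∀ a, morphIter σ 2 a ≠ [] := prep_pi_ne hk1 hk
  have hπpos : ∀ a, 1 ≤ (morphIter σ 2 a).length :=
    fun a => List.length_pos_iff.2 (hπne a)
  have hZpal : Z.reverse = Z := by rw [hZdef]; exact c1_pal_flat hp hq hσ hp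
  have hWpal : ∀ a, (morphIter σ 2 a ++ Z).reverse = morphIter σ 2 a ++ Z := by
    intro a
    have h1 : morphIter σ 2 a ++ Z = (σ a ++ p).flatMap σ ++ p := by
      rw [hZdef, morphIter_two, List.flatMap_append, List.append_assoc]
    have h2 : (σ a ++ p).reverse = σ a ++ p := by
      rw [hσ a]; exact c1_palword hp hq a
    rw [h1]
    exact c1_pal_flat hp hq hσ h2
  have hzlen : (Z.take i).length = i := by
    rw [List.length_take]
    omega
  have hZprefW : ∀ a, Z <+: morphIter σ 2 a ++ Z :=
    fun a => pal_pref_of_suff (hWpal a) hZpal (List.suffix_append _ _)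
  have hπz : ∀ a, morphIter σ 2 a ++ Z.take i
      = (morphIter σ 2 a ++ Z).take ((morphIter σ 2 a).length + i) :=
    fun a => (List.take_length_add_append i).symm
  have hzpref : ∀ a, Z.take i <+: morphIter σ 2 a ++ Z.take i := by
    intro a
    have hzW : Z.take i <+: morphIter σ 2 a ++ Z :=
      (List.take_prefix i Z).trans (hZprefW a)
    have h1 : Z.take i = (morphIter σ 2 a ++ Z).take i := by
      have := List.prefix_iff_eq_take.1 hzW
      rwa [hzlen] at this
    rw [hπz a, List.prefix_iff_eq_take, hzlen, List.take_take,
      inf_eq_left.mpr (by omega : i ≤ (morphIter σ 2 a).length + i)]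
    exact h1
  have hrel : ∀ a, Z.take i ++ τ a = morphIter σ 2 a ++ Z.take i := by
    intro a
    have h1 : Z.take i = (morphIter σ 2 a ++ Z.take i).take i := by
      have := List.prefix_iff_eq_take.1 (hzpref a)
      rwa [hzlen] at this
    rw [hτdef a]
    nth_rewrite 1 [h1]
    exact List.take_append_drop i _
  have hslice : ∀ a, τ a
      = ((morphIter σ 2 a ++ Z).take ((morphIter σ 2 a).length + i)).drop i := by
    intro a
    rw [hτdef a, hπz a]
  have hτlen : ∀ a, (τ a).length = (morphIter σ 2 a).length := by
    intro a
    rw [hτdef a, List.length_drop, List.length_append, hzlen]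
    omega
  have hτne : ∀ a, τ a ≠ [] := by
    intro a h
    have := hτlen a
    rw [h] at this
    have := hπpos a
    simp only [List.length_nil] at *
    omega
  have hfirst : ∀ a, ∃ (h : Z.length - 1 - i < Z.length) (w : List α),
      τ a = Z[Z.length - 1 - i] :: w := by
    intro a
    have hWlen : (morphIter σ 2 a ++ Z).length = (morphIter σ 2 a).length + Z.length :=
      List.length_append
    have h0 : 0 < (τ a).length := by rw [hτlen a]; exact hπpos a
    have hbZ : Z.length - 1 - i < Z.length := by omega
    have hval : (τ a)[0]'h0 = Z[Z.length - 1 - i]'hbZ := by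
      have hiW : i + 0 < (morphIter σ 2 a ++ Z).length := by rw [hWlen]; omega
      have e1 : (τ a)[0]'h0 = (morphIter σ 2 a ++ Z)[i + 0]'hiW := by
        have := hslice a
        rw [List.getElem_of_eq this h0, List.getElem_drop, List.getElem_take]
      have e2 : (morphIter σ 2 a ++ Z)[i + 0]'hiW
          = (morphIter σ 2 a ++ Z)[(morphIter σ 2 a ++ Z).length - 1 - (i+0)]'(by omega) :=
        pal_getElem (hWpal a) hiW
      have hidx : (morphIter σ 2 a ++ Z).length - 1 - (i + 0)
          = (morphIter σ 2 a).length + (Z.length - 1 - i) := by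
        rw [hWlen]
        have := hπpos a
        omega
      have e3 : (morphIter σ 2 a ++ Z)[(morphIter σ 2 a ++ Z).length - 1 - (i+0)]'(by omega)
          = (morphIter σ 2 a ++ Z)[(morphIter σ 2 a).length + (Z.length - 1 - i)]'(by
            rw [hWlen]; omega) := getElem_index_congr _ hidx _
      have e4 : (morphIter σ 2 a ++ Z)[(morphIter σ 2 a).length + (Z.length - 1 - i)]'(by
            rw [hWlen]; omega)
          = Z[(morphIter σ 2 a).length + (Z.length - 1 - i) - (morphIter σ 2 a).length]'(by
            omega) := List.getElem_append_right (by omega)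
      have e5 : Z[(morphIter σ 2 a).length + (Z.length - 1 - i)
            - (morphIter σ 2 a).length]'(by omega) = Z[Z.length - 1 - i]'hbZ :=
        getElem_index_congr _ (by omega) _
      rw [e1, e2, e3, e4, e5]
    refine ⟨hbZ, (τ a).drop 1, ?_⟩
    have he := eq_cons_head_drop (hτne a)
    rw [hval] at he
    exact he
  have hbZ : Z.length - 1 - i < Z.length := by omega
  have hc : ∀ a, ∃ w, τ a = Z[Z.length - 1 - i]'hbZ :: w := by
    intro a
    obtain ⟨h, w, hw⟩ := hfirst a
    exact ⟨w, hw⟩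
  exact ⟨assembly_left hk1 hk hfix hcard hrel hc, hslice, hτlen, hπpos, hWpal, hfirst⟩

end Case1


section Case1Forms

variable {σ : α → List α} {u : ℕ → α} {p : List α} {q : α → List α} {k : ℕ}

theorem case1_prefix (hk1 : 1 ≤ k) (hk : ∀ a b : α, b ∈ morphIter σ k a)
    (hfix : IsFixedPointOf σ u) (hcard : ∃ b1 b2 : α, b1 ≠ b2)
    (hp : IsPalindrome p) (hq : ∀ a, IsPalindrome (q a)) (hσ : ∀ a, σ a = p ++ q a)
    (hpne : p ≠ []) :
    ∃ (τ : α → List α) (p' : List α), IsPrimitive τ ∧ IsPalindrome p' ∧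
      p'.length ≤ 1 ∧ (∀ a, ∃ q', IsPalindrome q' ∧ τ a = p' ++ q') ∧
      ∃ v : ℕ → α, IsFixedPointOf τ v ∧
        ∀ t : List α, IsFactor v t ↔ IsFactor u t := by
  have hσne : ∀ a, σ a ≠ [] := primitive_ne_nil hk1 hk
  set Z := p.flatMap σ ++ p with hZdef
  have hZlen : 2 ≤ Z.length := by
    have h1 : 1 ≤ p.length := List.length_pos_iff.2 hpne
    have h2 : p.length ≤ (p.flatMap σ).length := length_le_length_flatMap hσne p
    rw [hZdef, List.length_append]
    omega
  set i := Z.length / 2 with hidef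
  have hi1 : 1 ≤ i := by omega
  have hile : i + 1 ≤ Z.length := by omega
  set τ := fun a => (morphIter σ 2 a ++ Z.take i).drop i with hτdef
  obtain ⟨⟨hprim, v, hvfix, hvfac⟩, hslice, hτlen, hπpos, hWpal, hfirst⟩ :=
    case1_core hk1 hk hfix hcard hp hq hσ hpne hZdef hi1 hile (τ := τ)
      (fun a => rfl)
  rcases Nat.even_or_odd Z.length with he | ho
  · obtain ⟨r, hr⟩ := he
    refine ⟨τ, [], hprim, rfl, by simp, ?_, v, hvfix, hvfac⟩
    intro a
    refine ⟨τ a, ?_, by simp⟩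
    show (τ a).reverse = τ a
    rw [hslice a]
    apply palSlice (hWpal a)
    · omega
    · rw [List.length_append]; omega
    · rw [List.length_append]; omega
  · obtain ⟨r, hr⟩ := ho
    have hbZ : Z.length - 1 - i < Z.length := by omega
    refine ⟨τ, [Z[Z.length - 1 - i]'hbZ], hprim, rfl, by simp, ?_, v, hvfix, hvfac⟩
    intro a
    obtain ⟨h, w, hw⟩ := hfirst a
    refine ⟨(τ a).drop 1, ?_, ?_⟩
    · show ((τ a).drop 1).reverse = (τ a).drop 1
      have hd : (τ a).drop 1
          = ((morphIter σ 2 a ++ Z).take ((morphIter σ 2 a).length + i)).drop (i+1) := by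
        rw [hslice a, List.drop_drop]
      rw [hd]
      apply palSlice (hWpal a)
      · have := hπpos a; omega
      · rw [List.length_append]; omega
      · rw [List.length_append]; omega
    · have hdw : (τ a).drop 1 = w := by rw [hw]; rfl
      rw [hdw, hw]
      rfl

theorem case1_suffix (hk1 : 1 ≤ k) (hk : ∀ a b : α, b ∈ morphIter σ k a)
    (hfix : IsFixedPointOf σ u) (hcard : ∃ b1 b2 : α, b1 ≠ b2)
    (hp : IsPalindrome p) (hq : ∀ a, IsPalindrome (q a)) (hσ : ∀ a, σ a = p ++ q a)
    (hpne : p ≠ []) :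
    ∃ (τ : α → List α) (p' : List α), IsPrimitive τ ∧ IsPalindrome p' ∧
      p'.length ≤ 1 ∧ (∀ a, ∃ q', IsPalindrome q' ∧ τ a = q' ++ p') ∧
      ∃ v : ℕ → α, IsFixedPointOf τ v ∧
        ∀ t : List α, IsFactor v t ↔ IsFactor u t := by
  have hσne : ∀ a, σ a ≠ [] := primitive_ne_nil hk1 hk
  set Z := p.flatMap σ ++ p with hZdef
  have hZlen : 2 ≤ Z.length := by
    have h1 : 1 ≤ p.length := List.length_pos_iff.2 hpne
    have h2 : p.length ≤ (p.flatMap σ).length := length_le_length_flatMap hσne p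
    rw [hZdef, List.length_append]
    omega
  set i := (Z.length + 1) / 2 with hidef
  have hi1 : 1 ≤ i := by omega
  have hile : i + 1 ≤ Z.length := by omega
  set τ := fun a => (morphIter σ 2 a ++ Z.take i).drop i with hτdef
  obtain ⟨⟨hprim, v, hvfix, hvfac⟩, hslice, hτlen, hπpos, hWpal, hfirst⟩ :=
    case1_core hk1 hk hfix hcard hp hq hσ hpne hZdef hi1 hile (τ := τ)
      (fun a => rfl)
  have hτne : ∀ a, τ a ≠ [] := by
    intro a h
    have h1 := hτlen a
    have h2 := hπpos a
    rw [h] at h1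
    simp only [List.length_nil] at h1
    omega
  rcases Nat.even_or_odd Z.length with he | ho
  · obtain ⟨r, hr⟩ := he
    refine ⟨τ, [], hprim, rfl, by simp, ?_, v, hvfix, hvfac⟩
    intro a
    refine ⟨τ a, ?_, by simp⟩
    show (τ a).reverse = τ a
    rw [hslice a]
    apply palSlice (hWpal a)
    · omega
    · rw [List.length_append]; omega
    · rw [List.length_append]; omega
  · obtain ⟨r, hr⟩ := ho
    have hbZ : i - 1 < Z.length := by omega
    refine ⟨τ, [Z[i - 1]'hbZ], hprim, rfl, by simp, ?_, v, hvfix, hvfac⟩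
    intro a
    have h0 : 0 < (τ a).length := by rw [hτlen a]; exact hπpos a
    have hWlen : (morphIter σ 2 a ++ Z).length = (morphIter σ 2 a).length + Z.length :=
      List.length_append
    have hlast : (τ a).getLast (hτne a) = Z[i - 1]'hbZ := by
      rw [List.getLast_eq_getElem]
      have hn : (τ a).length - 1 < (τ a).length := by omega
      have e1 : (τ a)[(τ a).length - 1]'hn
          = (morphIter σ 2 a ++ Z)[i + ((τ a).length - 1)]'(by
            rw [hWlen]; have := hτlen a; omega) := by
        rw [List.getElem_of_eq (hslice a) hn, List.getElem_drop, List.getElem_take]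
      rw [e1]
      have e2 : (morphIter σ 2 a ++ Z)[i + ((τ a).length - 1)]'(by
            rw [hWlen]; have := hτlen a; omega)
          = Z[i + ((τ a).length - 1) - (morphIter σ 2 a).length]'(by
            have := hτlen a; have := hπpos a; omega) :=
        List.getElem_append_right (by have := hτlen a; have := hπpos a; omega)
      rw [e2]
      exact getElem_index_congr _ (by have := hτlen a; have := hπpos a; omega) _
    refine ⟨(τ a).dropLast, ?_, ?_⟩
    · show ((τ a).dropLast).reverse = (τ a).dropLast
      have hd : (τ a).dropLast = ((morphIter σ 2 a ++ Z).take
          ((morphIter σ 2 a).length + i - 1)).drop i := by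
        rw [List.dropLast_eq_take, hτlen a]
        rw [hslice a, List.take_drop, List.take_take]
        congr 1
        · congr 1
          rw [inf_eq_left.mpr (by have := hπpos a; omega)]
          have := hπpos a
          omega
      rw [hd]
      apply palSlice (hWpal a)
      · have := hπpos a; omega
      · rw [List.length_append]; omega
      · rw [List.length_append]; have := hπpos a; omega
    · rw [← hlast]
      exact (List.dropLast_append_getLast (hτne a)).symm

end Case1Forms

/-! ### Case 2: σ a = q a ++ p -/

section Case2

variable {σ : α → List α} {u : ℕ → α} {p : List α} {q : α → List α} {k : ℕ}

lemma c2_shift (hσ : ∀ a, σ a = q a ++ p) (w : List α) :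
    w.flatMap (fun b => p ++ q b) ++ p = p ++ w.flatMap σ := by
  induction w with
  | nil => simp
  | cons a w ih =>
      simp only [List.flatMap_cons, List.append_assoc]
      rw [ih, hσ a]
      simp only [List.append_assoc]

lemma c2_revflat (hp : IsPalindrome p) (hq : ∀ a, IsPalindrome (q a))
    (hσ : ∀ a, σ a = q a ++ p) {w : List α} (hw : w.reverse = w) :
    (w.flatMap σ).reverse = w.flatMap (fun b => p ++ q b) := by
  rw [List.reverse_flatMap, hw]
  congr 1
  funext b
  show (σ b).reverse = _
  rw [hσ b, List.reverse_append, hp, hq b]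

lemma c2_pal_flat (hp : IsPalindrome p) (hq : ∀ a, IsPalindrome (q a))
    (hσ : ∀ a, σ a = q a ++ p) {w : List α} (hw : w.reverse = w) :
    (p ++ w.flatMap σ).reverse = p ++ w.flatMap σ := by
  rw [List.reverse_append, hp, c2_revflat hp hq hσ hw, c2_shift hσ]

lemma c2_palword (hp : IsPalindrome p) (hq : ∀ a, IsPalindrome (q a)) (a : α) :
    (p ++ (q a ++ p)).reverse = p ++ (q a ++ p) := by
  rw [List.reverse_append, List.reverse_append, hp, hq a]
  simp [List.append_assoc]

theorem case2_core (hk1 : 1 ≤ k) (hk : ∀ a b : α, b ∈ morphIter σ k a)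
    (hfix : IsFixedPointOf σ u) (hcard : ∃ b1 b2 : α, b1 ≠ b2)
    (hp : IsPalindrome p) (hq : ∀ a, IsPalindrome (q a)) (hσ : ∀ a, σ a = q a ++ p)
    {Z : List α} (hZdef : Z = p ++ p.flatMap σ)
    {s₀ : ℕ} (hile : s₀ + 1 ≤ Z.length)
    {τ : α → List α}
    (hτdef : ∀ a, τ a = (Z.drop s₀ ++ morphIter σ 2 a).take (morphIter σ 2 a).length) :
    (IsPrimitive τ ∧ ∃ v : ℕ → α, IsFixedPointOf τ v ∧
        ∀ t : List α, IsFactor v t ↔ IsFactor u t)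
    ∧ (∀ a, τ a = ((Z ++ morphIter σ 2 a).take (s₀ + (morphIter σ 2 a).length)).drop s₀)
    ∧ (∀ a, (τ a).length = (morphIter σ 2 a).length)
    ∧ (∀ a, 1 ≤ (morphIter σ 2 a).length)
    ∧ (∀ a, (Z ++ morphIter σ 2 a).reverse = Z ++ morphIter σ 2 a)
    ∧ (∀ a, ∃ (h : s₀ < Z.length) (w : List α), τ a = Z[s₀] :: w) := by
  have hσne : ∀ a, σ a ≠ [] := primitive_ne_nil hk1 hk
  have hπne : ∀ a, morphIter σ 2 a ≠ [] := prep_pi_ne hk1 hk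
  have hπpos : ∀ a, 1 ≤ (morphIter σ 2 a).length :=
    fun a => List.length_pos_iff.2 (hπne a)
  have hZpal : Z.reverse = Z := by rw [hZdef]; exact c2_pal_flat hp hq hσ hp
  have hWpal : ∀ a, (Z ++ morphIter σ 2 a).reverse = Z ++ morphIter σ 2 a := by
    intro a
    have h1 : Z ++ morphIter σ 2 a = p ++ (p ++ σ a).flatMap σ := by
      rw [hZdef, morphIter_two, List.flatMap_append, List.append_assoc]
    have h2 : (p ++ σ a).reverse = p ++ σ a := by
      rw [hσ a]; exact c2_palword hp hq a
    rw [h1]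
    exact c2_pal_flat hp hq hσ h2
  have hzπ_eq : ∀ a, Z.drop s₀ ++ morphIter σ 2 a = (Z ++ morphIter σ 2 a).drop s₀ := by
    intro a
    rw [List.drop_append, Nat.sub_eq_zero_of_le (by omega), List.drop_zero]
  have hzsuff : ∀ a, Z.drop s₀ <:+ Z.drop s₀ ++ morphIter σ 2 a := by
    intro a
    have hzW : Z.drop s₀ <:+ Z ++ morphIter σ 2 a :=
      (List.drop_suffix s₀ Z).trans
        (pal_suff_of_pref (hWpal a) hZpal (List.prefix_append _ _))
    have hW2 : Z ++ morphIter σ 2 a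
        = (Z ++ morphIter σ 2 a).take s₀ ++ (Z.drop s₀ ++ morphIter σ 2 a) := by
      rw [hzπ_eq a, List.take_append_drop]
    rw [hW2] at hzW
    apply suffix_of_suffix_length_le hzW
    rw [List.length_append]
    omega
  have hrel : ∀ a, Z.drop s₀ ++ morphIter σ 2 a = τ a ++ Z.drop s₀ := by
    intro a
    obtain ⟨s, hs⟩ := hzsuff a
    have hslen : s.length = (morphIter σ 2 a).length := by
      have := congrArg List.length hs
      simp only [List.length_append] at this
      omega
    have hτs : τ a = s := by
      rw [hτdef a, ← hs, List.take_left' hslen]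
    rw [hτs]
    exact hs.symm
  have hslice : ∀ a, τ a
      = ((Z ++ morphIter σ 2 a).take (s₀ + (morphIter σ 2 a).length)).drop s₀ := by
    intro a
    rw [hτdef a, hzπ_eq a, List.take_drop]
  have hτlen : ∀ a, (τ a).length = (morphIter σ 2 a).length := by
    intro a
    rw [hτdef a, List.length_take, List.length_append]
    omega
  have hτne : ∀ a, τ a ≠ [] := by
    intro a h
    have h1 := hτlen a
    have h2 := hπpos a
    rw [h] at h1
    simp only [List.length_nil] at h1
    omega
  have hfirst : ∀ a, ∃ (h : s₀ < Z.length) (w : List α), τ a = Z[s₀] :: w := by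
    intro a
    have h0 : 0 < (τ a).length := by rw [hτlen a]; exact hπpos a
    have hbZ : s₀ < Z.length := by omega
    have hval : (τ a)[0]'h0 = Z[s₀]'hbZ := by
      have hiW : s₀ + 0 < (Z ++ morphIter σ 2 a).length := by
        rw [List.length_append]; omega
      have e1 : (τ a)[0]'h0 = (Z ++ morphIter σ 2 a)[s₀ + 0]'hiW := by
        rw [List.getElem_of_eq (hslice a) h0, List.getElem_drop, List.getElem_take]
      rw [e1]
      have e2 : (Z ++ morphIter σ 2 a)[s₀ + 0]'hiW = Z[s₀ + 0]'(by omega) :=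
        List.getElem_append_left (by omega)
      rw [e2]
      exact getElem_index_congr _ (by omega) _
    refine ⟨hbZ, (τ a).drop 1, ?_⟩
    have he := eq_cons_head_drop (hτne a)
    rw [hval] at he
    exact he
  have hbZ : s₀ < Z.length := by omega
  have hc : ∀ a, ∃ w, τ a = Z[s₀]'hbZ :: w := by
    intro a
    obtain ⟨h, w, hw⟩ := hfirst a
    exact ⟨w, hw⟩
  exact ⟨assembly_right hk1 hk hfix hcard hrel hc, hslice, hτlen, hπpos, hWpal, hfirst⟩

end Case2

section Case2Forms

variable {σ : α → List α} {u : ℕ → α} {p : List α} {q : α → List α} {k : ℕ}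

theorem case2_prefix (hk1 : 1 ≤ k) (hk : ∀ a b : α, b ∈ morphIter σ k a)
    (hfix : IsFixedPointOf σ u) (hcard : ∃ b1 b2 : α, b1 ≠ b2)
    (hp : IsPalindrome p) (hq : ∀ a, IsPalindrome (q a)) (hσ : ∀ a, σ a = q a ++ p)
    (hpne : p ≠ []) :
    ∃ (τ : α → List α) (p' : List α), IsPrimitive τ ∧ IsPalindrome p' ∧
      p'.length ≤ 1 ∧ (∀ a, ∃ q', IsPalindrome q' ∧ τ a = p' ++ q') ∧
      ∃ v : ℕ → α, IsFixedPointOf τ v ∧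
        ∀ t : List α, IsFactor v t ↔ IsFactor u t := by
  have hσne : ∀ a, σ a ≠ [] := primitive_ne_nil hk1 hk
  set Z := p ++ p.flatMap σ with hZdef
  have hZlen : 2 ≤ Z.length := by
    have h1 : 1 ≤ p.length := List.length_pos_iff.2 hpne
    have h2 : p.length ≤ (p.flatMap σ).length := length_le_length_flatMap hσne p
    rw [hZdef, List.length_append]
    omega
  set s₀ := Z.length / 2 with hidef
  have hile : s₀ + 1 ≤ Z.length := by omega
  set τ := fun a => (Z.drop s₀ ++ morphIter σ 2 a).take (morphIter σ 2 a).length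
    with hτdef
  obtain ⟨⟨hprim, v, hvfix, hvfac⟩, hslice, hτlen, hπpos, hWpal, hfirst⟩ :=
    case2_core hk1 hk hfix hcard hp hq hσ hZdef hile (τ := τ) (fun a => rfl)
  rcases Nat.even_or_odd Z.length with he | ho
  · obtain ⟨r, hr⟩ := he
    refine ⟨τ, [], hprim, rfl, by simp, ?_, v, hvfix, hvfac⟩
    intro a
    refine ⟨τ a, ?_, by simp⟩
    show (τ a).reverse = τ a
    rw [hslice a]
    apply palSlice (hWpal a)
    · omega
    · rw [List.length_append]; omega
    · rw [List.length_append]; omega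
  · obtain ⟨r, hr⟩ := ho
    have hbZ : s₀ < Z.length := by omega
    refine ⟨τ, [Z[s₀]'hbZ], hprim, rfl, by simp, ?_, v, hvfix, hvfac⟩
    intro a
    obtain ⟨h, w, hw⟩ := hfirst a
    refine ⟨(τ a).drop 1, ?_, ?_⟩
    · show ((τ a).drop 1).reverse = (τ a).drop 1
      have hd : (τ a).drop 1
          = ((Z ++ morphIter σ 2 a).take (s₀ + (morphIter σ 2 a).length)).drop (s₀+1) := by
        rw [hslice a, List.drop_drop]
      rw [hd]
      apply palSlice (hWpal a)
      · have := hπpos a; omega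
      · rw [List.length_append]; omega
      · rw [List.length_append]; omega
    · have hdw : (τ a).drop 1 = w := by rw [hw]; rfl
      rw [hdw, hw]
      rfl

theorem case2_suffix (hk1 : 1 ≤ k) (hk : ∀ a b : α, b ∈ morphIter σ k a)
    (hfix : IsFixedPointOf σ u) (hcard : ∃ b1 b2 : α, b1 ≠ b2)
    (hp : IsPalindrome p) (hq : ∀ a, IsPalindrome (q a)) (hσ : ∀ a, σ a = q a ++ p)
    (hpne : p ≠ []) :
    ∃ (τ : α → List α) (p' : List α), IsPrimitive τ ∧ IsPalindrome p' ∧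
      p'.length ≤ 1 ∧ (∀ a, ∃ q', IsPalindrome q' ∧ τ a = q' ++ p') ∧
      ∃ v : ℕ → α, IsFixedPointOf τ v ∧
        ∀ t : List α, IsFactor v t ↔ IsFactor u t := by
  have hσne : ∀ a, σ a ≠ [] := primitive_ne_nil hk1 hk
  set Z := p ++ p.flatMap σ with hZdef
  have hZlen : 2 ≤ Z.length := by
    have h1 : 1 ≤ p.length := List.length_pos_iff.2 hpne
    have h2 : p.length ≤ (p.flatMap σ).length := length_le_length_flatMap hσne p
    rw [hZdef, List.length_append]
    omega
  set s₀ := (Z.length + 1) / 2 with hidef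
  have hile : s₀ + 1 ≤ Z.length := by omega
  set τ := fun a => (Z.drop s₀ ++ morphIter σ 2 a).take (morphIter σ 2 a).length
    with hτdef
  obtain ⟨⟨hprim, v, hvfix, hvfac⟩, hslice, hτlen, hπpos, hWpal, hfirst⟩ :=
    case2_core hk1 hk hfix hcard hp hq hσ hZdef hile (τ := τ) (fun a => rfl)
  have hτne : ∀ a, τ a ≠ [] := by
    intro a h
    have h1 := hτlen a
    have h2 := hπpos a
    rw [h] at h1
    simp only [List.length_nil] at h1
    omega
  rcases Nat.even_or_odd Z.length with he | ho
  · obtain ⟨r, hr⟩ := he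
    refine ⟨τ, [], hprim, rfl, by simp, ?_, v, hvfix, hvfac⟩
    intro a
    refine ⟨τ a, ?_, by simp⟩
    show (τ a).reverse = τ a
    rw [hslice a]
    apply palSlice (hWpal a)
    · omega
    · rw [List.length_append]; omega
    · rw [List.length_append]; omega
  · obtain ⟨r, hr⟩ := ho
    have hbZ : s₀ - 1 < Z.length := by omega
    refine ⟨τ, [Z[s₀ - 1]'hbZ], hprim, rfl, by simp, ?_, v, hvfix, hvfac⟩
    intro a
    have h0 : 0 < (τ a).length := by rw [hτlen a]; exact hπpos a
    have hWlen : (Z ++ morphIter σ 2 a).length = Z.length + (morphIter σ 2 a).length :=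
      List.length_append
    have hlast : (τ a).getLast (hτne a) = Z[s₀ - 1]'hbZ := by
      rw [List.getLast_eq_getElem]
      have hn : (τ a).length - 1 < (τ a).length := by omega
      have e1 : (τ a)[(τ a).length - 1]'hn
          = (Z ++ morphIter σ 2 a)[s₀ + ((τ a).length - 1)]'(by
            rw [hWlen]; have := hτlen a; have := hπpos a; omega) := by
        rw [List.getElem_of_eq (hslice a) hn, List.getElem_drop, List.getElem_take]
      rw [e1]
      have e2 := pal_getElem (hWpal a) (show s₀ + ((τ a).length - 1)
          < (Z ++ morphIter σ 2 a).length by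
        rw [hWlen]; have := hτlen a; have := hπpos a; omega)
      rw [e2]
      have e3 : (Z ++ morphIter σ 2 a).length - 1 - (s₀ + ((τ a).length - 1))
          = s₀ - 1 := by
        rw [hWlen]
        have := hτlen a; have := hπpos a
        omega
      have e4 := getElem_index_congr (Z ++ morphIter σ 2 a) e3 (by
        rw [hWlen]; omega)
      rw [e4]
      have e5 : (Z ++ morphIter σ 2 a)[s₀ - 1]'(by rw [hWlen]; omega)
          = Z[s₀ - 1]'hbZ := List.getElem_append_left hbZ
      rw [e5]
    refine ⟨(τ a).dropLast, ?_, ?_⟩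
    · show ((τ a).dropLast).reverse = (τ a).dropLast
      have hd : (τ a).dropLast = ((Z ++ morphIter σ 2 a).take
          (s₀ + (morphIter σ 2 a).length - 1)).drop s₀ := by
        rw [List.dropLast_eq_take, hτlen a, hslice a, List.take_drop, List.take_take]
        congr 2
        rw [inf_eq_left.mpr (by have := hπpos a; omega)]
        have := hπpos a
        omega
      rw [hd]
      apply palSlice (hWpal a)
      · have := hπpos a; omega
      · rw [List.length_append]; omega
      · rw [List.length_append]; have := hπpos a; omega
    · rw [← hlast]
      exact (List.dropLast_append_getLast (hτne a)).symm

end Case2Forms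

/-! ### Degenerate cases and main theorem -/

section Final

variable {σ : α → List α} {u : ℕ → α} {k : ℕ}

theorem trivial_forms (hk1 : 1 ≤ k) (hk : ∀ a b : α, b ∈ morphIter σ k a)
    (hfix : IsFixedPointOf σ u) (hpal : ∀ a, IsPalindrome (σ a)) :
    (∃ (τ : α → List α) (p' : List α), IsPrimitive τ ∧ IsPalindrome p' ∧
      p'.length ≤ 1 ∧ (∀ a, ∃ q', IsPalindrome q' ∧ τ a = p' ++ q') ∧
      ∃ v : ℕ → α, IsFixedPointOf τ v ∧
        ∀ t : List α, IsFactor v t ↔ IsFactor u t) ∧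
    (∃ (τ : α → List α) (p' : List α), IsPrimitive τ ∧ IsPalindrome p' ∧
      p'.length ≤ 1 ∧ (∀ a, ∃ q', IsPalindrome q' ∧ τ a = q' ++ p') ∧
      ∃ v : ℕ → α, IsFixedPointOf τ v ∧
        ∀ t : List α, IsFactor v t ↔ IsFactor u t) := by
  constructor
  · exact ⟨σ, [], ⟨k, hk1, hk⟩, rfl, by simp,
      fun a => ⟨σ a, hpal a, rfl⟩, u, hfix, fun t => Iff.rfl⟩
  · exact ⟨σ, [], ⟨k, hk1, hk⟩, rfl, by simp,
      fun a => ⟨σ a, hpal a, (List.append_nil _).symm⟩, u, hfix, fun t => Iff.rfl⟩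

theorem subsingleton_forms (hsub : ∀ b1 b2 : α, b1 = b2) (u : ℕ → α) :
    (∃ (τ : α → List α) (p' : List α), IsPrimitive τ ∧ IsPalindrome p' ∧
      p'.length ≤ 1 ∧ (∀ a, ∃ q', IsPalindrome q' ∧ τ a = p' ++ q') ∧
      ∃ v : ℕ → α, IsFixedPointOf τ v ∧
        ∀ t : List α, IsFactor v t ↔ IsFactor u t) ∧
    (∃ (τ : α → List α) (p' : List α), IsPrimitive τ ∧ IsPalindrome p' ∧
      p'.length ≤ 1 ∧ (∀ a, ∃ q', IsPalindrome q' ∧ τ a = q' ++ p') ∧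
      ∃ v : ℕ → α, IsFixedPointOf τ v ∧
        ∀ t : List α, IsFactor v t ↔ IsFactor u t) := by
  set τ : α → List α := fun a => [a, a] with hτdef
  have hτprim : IsPrimitive τ := by
    refine ⟨1, le_rfl, ?_⟩
    intro a b
    rw [morphIter_one]
    rw [hsub b a]
    simp [hτdef]
  have hτfix : IsFixedPointOf τ u := by
    intro n
    apply List.ext_getElem
    · simp
    · intro m h1 h2
      exact hsub _ _
  have hτpal : ∀ a, IsPalindrome (τ a) := by
    intro a
    show (τ a).reverse = τ a
    simp [hτdef]
  constructor
  · exact ⟨τ, [], hτprim, rfl, by simp,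
      fun a => ⟨τ a, hτpal a, rfl⟩, u, hτfix, fun t => Iff.rfl⟩
  · exact ⟨τ, [], hτprim, rfl, by simp,
      fun a => ⟨τ a, hτpal a, (List.append_nil _).symm⟩, u, hτfix, fun t => Iff.rfl⟩

end Final


/-- If `u` is a fixed point of a primitive class-P morphism, then there is a
primitive class-P morphism `τ`, whose class-P palindrome `p'` has length `0`
or `1`, with a fixed point `v` having exactly the same factors as `u`;
moreover `τ` can be chosen of either form `a → p' q'_a` or `a → q'_a p'`. -/
theorem stmt16 {α : Type*} [Fintype α] (σ : α → List α) (hprim : IsPrimitive σ)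
    (u : ℕ → α) (hfix : IsFixedPointOf σ u) (hP : ClassP σ) :
    (∃ (τ : α → List α) (p' : List α), IsPrimitive τ ∧ IsPalindrome p' ∧
      p'.length ≤ 1 ∧ (∀ a, ∃ q', IsPalindrome q' ∧ τ a = p' ++ q') ∧
      ∃ v : ℕ → α, IsFixedPointOf τ v ∧
        ∀ t : List α, IsFactor v t ↔ IsFactor u t) ∧
    (∃ (τ : α → List α) (p' : List α), IsPrimitive τ ∧ IsPalindrome p' ∧
      p'.length ≤ 1 ∧ (∀ a, ∃ q', IsPalindrome q' ∧ τ a = q' ++ p') ∧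
      ∃ v : ℕ → α, IsFixedPointOf τ v ∧
        ∀ t : List α, IsFactor v t ↔ IsFactor u t) := by
  obtain ⟨k, hk1, hk⟩ := hprim
  obtain ⟨p, hp, hcase⟩ := hP
  by_cases hcard : ∃ b1 b2 : α, b1 ≠ b2
  · rcases hcase with h1 | h2
    · choose q hqpal hqeq using h1
      by_cases hpne : p = []
      · subst hpne
        have hpal : ∀ a, IsPalindrome (σ a) := by
          intro a
          rw [hqeq a, List.nil_append]
          exact hqpal a
        exact trivial_forms hk1 hk hfix hpal
      · exact ⟨case1_prefix hk1 hk hfix hcard hp hqpal hqeq hpne,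
          case1_suffix hk1 hk hfix hcard hp hqpal hqeq hpne⟩
    · choose q hqpal hqeq using h2
      by_cases hpne : p = []
      · subst hpne
        have hpal : ∀ a, IsPalindrome (σ a) := by
          intro a
          rw [hqeq a, List.append_nil]
          exact hqpal a
        exact trivial_forms hk1 hk hfix hpal
      · exact ⟨case2_prefix hk1 hk hfix hcard hp hqpal hqeq hpne,
          case2_suffix hk1 hk hfix hcard hp hqpal hqeq hpne⟩
  · push_neg at hcard
    exact subsingleton_forms hcard u


end PalPaper
end

section
/- Let w be a non-empty finite word and let u = www… be the periodic infinite sequence obtained by repeating w. If u contains a palindromic factor of length at least 2|w|, then w can be written as w = AB where A and B are both palindromes. -/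
namespace PalPaper

variable {α : Type*}

/-- If the periodic sequence `w w w ⋯` contains a palindromic factor of length
at least `2|w|`, then `w = A ++ B` with `A` and `B` palindromes. -/
theorem stmt18 {α : Type*} (w : List α) (hw : w ≠ []) (u : ℕ → α)
    (hu : ∀ n, u n = w[n % w.length]'(Nat.mod_lt _ (List.length_pos_iff.mpr hw)))
    (h : ∃ s : List α, IsFactor u s ∧ IsPalindrome s ∧ 2 * w.length ≤ s.length) :
    ∃ A B : List α, w = A ++ B ∧ IsPalindrome A ∧ IsPalindrome B := by
  obtain ⟨s, ⟨i, hs⟩, hpal, hlen⟩ := h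
  have hn0 : 0 < w.length := List.length_pos_iff.mpr hw
  set n := w.length with hn
  set L := s.length with hL
  have hL2 : 2 * n ≤ L := hlen
  have hpal' : s.reverse = s := hpal
  have hsget : ∀ j (hj : j < L), s[j]'hj = u (i + j) := by
    intro j hj
    rw [List.getElem_of_eq hs hj]
    simp [factorAt]
  have hrev : ∀ j, j < L → u (i + j) = u (i + (L - 1 - j)) := by
    intro j hj
    have hj' : L - 1 - j < L := by omega
    have h1 : s.reverse[j]'(by simpa using hj) = s[j]'hj := by
      simp only [hpal']
    rw [List.getElem_reverse] at h1
    rw [← hsget j hj, ← hsget (L - 1 - j) hj']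
    exact h1.symm
  have hper : ∀ x y, x % n = y % n → u x = u y := by
    intro x y hxy
    rw [hu x, hu y]
    congr 1
  have keyu : ∀ x y, (x + y) % n = (2 * i + L - 1) % n → u x = u y := by
    intro x y hxy
    have hin : i % n < n := Nat.mod_lt _ hn0
    set r := (x + (n - i % n)) % n with hr
    have hrn : r < n := Nat.mod_lt _ hn0
    set a := i + r with ha
    have ha1 : a % n = x % n := by
      have h1 : a ≡ i % n + (x + (n - i % n)) [MOD n] :=
        Nat.ModEq.add (Nat.mod_modEq i n).symm (Nat.mod_modEq _ n)
      have h5 : i % n + (x + (n - i % n)) = x + n := by omega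
      rw [h5] at h1
      have : a % n = (x + n) % n := h1
      rwa [Nat.add_mod_right] at this
    set b := 2 * i + L - 1 - a with hb
    have hab : a + b = 2 * i + L - 1 := by omega
    have hb1 : b % n = y % n := by
      have h1 : a + b ≡ x + y [MOD n] := by
        show (a + b) % n = (x + y) % n
        rw [hab, hxy]
      exact Nat.ModEq.add_left_cancel ha1 h1
    have h2 : u a = u b := by
      have h3 := hrev r (by omega)
      have e : i + (L - 1 - r) = b := by omega
      rw [e] at h3
      exact h3
    exact (hper x a ha1.symm).trans (h2.trans (hper b y hb1))
  set m := (2 * i + L - 1) % n with hm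
  have hmn : m < n := Nat.mod_lt _ hn0
  have huw : ∀ t (ht : t < n), w[t]'ht = u t := by
    intro t ht
    rw [hu t]
    simp only [Nat.mod_eq_of_lt (show t < w.length from ht)]
  have keyw : ∀ p q (hp : p < n) (hq : q < n), (p + q) % n = m →
      w[p]'hp = w[q]'hq := by
    intro p q hp hq hpq
    rw [huw p hp, huw q hq]
    exact keyu p q (by rw [hpq, hm])
  refine ⟨w.take (m + 1), w.drop (m + 1), (List.take_append_drop _ w).symm, ?_, ?_⟩
  · show (w.take (m + 1)).reverse = w.take (m + 1)
    have hlenA : (w.take (m + 1)).length = m + 1 := by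
      rw [List.length_take]; omega
    apply List.ext_getElem
    · simp
    · intro t h1 h2
      rw [List.getElem_reverse, List.getElem_take, List.getElem_take]
      have ht : t < m + 1 := by omega
      apply keyw
      have : (w.take (m + 1)).length - 1 - t = m - t := by omega
      rw [this]
      have : m - t + t = m := by omega
      rw [this]
      exact Nat.mod_eq_of_lt hmn
  · show (w.drop (m + 1)).reverse = w.drop (m + 1)
    have hlenB : (w.drop (m + 1)).length = n - (m + 1) := by
      rw [List.length_drop]
    apply List.ext_getElem
    · simp
    · intro t h1 h2
      rw [List.getElem_reverse, List.getElem_drop, List.getElem_drop]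
      have ht : t < n - (m + 1) := by omega
      apply keyw
      have e1 : m + 1 + ((w.drop (m + 1)).length - 1 - t) = n - 1 - t := by omega
      rw [e1]
      have e2 : n - 1 - t + (m + 1 + t) = m + n := by omega
      rw [e2]
      rw [Nat.add_mod_right]
      exact Nat.mod_eq_of_lt hmn


end PalPaper
end
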